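/- Let X be the constructed set. For any choice of bijections σ_j : A_j → {1,...,r} \ {i(j)} for each 1 ≤ j ≤ d, define X_i = {x^i} ∪ {σ_j^{-1}(i) : 1 ≤ j ≤ d, i ≠ i(j)}. Then 0 ∈ conv(X_i) for all i, and X_1, ..., X_r is a Tverberg partition of X. -/

import Mathlib

open Finset Set

/-- The standard basis vector `e^j` of `ℝ^d`. -/
noncomputable def stdVec (d : ℕ) (j : Fin d) : Fin d → ℝ := Pi.single j 1

/-- The set `A_j = {e^j, 2e^j, ..., (r-1)e^j}`. -/
def Aset (d r : ℕ) (j : Fin d) : Set (Fin d → ℝ) :=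
  {v | ∃ k : ℕ, 1 ≤ k ∧ k ≤ r - 1 ∧ v = (k : ℝ) • stdVec d j}

/-- The point `x^i`, with `x^i_j = 0` if `i = i(j)` and `x^i_j = -i` otherwise
(indices taken in `{1,...,r}`, so `Fin r` index `i` corresponds to `i+1`). -/
def xpt (d r : ℕ) (ι : Fin d → Fin r) (i : Fin r) : Fin d → ℝ :=
  fun j => if ι j = i then 0 else -((i : ℕ) + 1 : ℝ)

/-- The set `A = {x^1, ..., x^r}`. -/
def Apts (d r : ℕ) (ι : Fin d → Fin r) : Set (Fin d → ℝ) := Set.range (xpt d r ι)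

/-- The constructed set `X = A ∪ A_1 ∪ ⋯ ∪ A_d`. -/
def Xset (d r : ℕ) (ι : Fin d → Fin r) : Set (Fin d → ℝ) :=
  Apts d r ι ∪ ⋃ j, Aset d r j

/-- `P : Fin r → Set (Fin d → ℝ)` is a Tverberg partition of `X`:
a partition of `X` into pairwise disjoint parts whose convex hulls share a point. -/
def IsTverbergPartition (d r : ℕ) (X : Set (Fin d → ℝ))
    (P : Fin r → Set (Fin d → ℝ)) : Prop :=
  (⋃ i, P i) = X ∧ (∀ i i', i ≠ i' → Disjoint (P i) (P i')) ∧
    ∃ p : Fin d → ℝ, ∀ i, p ∈ convexHull ℝ (P i)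

lemma aset_self {d r : ℕ} {j : Fin d} {v : Fin d → ℝ} (hv : v ∈ Aset d r j) :
    1 ≤ v j := by
  obtain ⟨k, hk1, _, rfl⟩ := hv
  simpa [stdVec] using (by exact_mod_cast hk1 : (1:ℝ) ≤ k)

lemma aset_ne {d r : ℕ} {j : Fin d} {v : Fin d → ℝ} (hv : v ∈ Aset d r j)
    {j' : Fin d} (h : j' ≠ j) : v j' = 0 := by
  obtain ⟨k, _, _, rfl⟩ := hv
  simp [stdVec, Pi.single_eq_of_ne h]

lemma xpt_nonpos {d r : ℕ} (ι : Fin d → Fin r) (i : Fin r) (j : Fin d) :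
    xpt d r ι i j ≤ 0 := by
  unfold xpt
  split
  · exact le_refl 0
  · have : (0:ℝ) ≤ (i : ℕ) + 1 := by positivity
    linarith

lemma xpt_ne {d r : ℕ} (hd : 1 ≤ d) (ι : Fin d → Fin r) {i i' : Fin r}
    (h : i ≠ i') : xpt d r ι i ≠ xpt d r ι i' := by
  intro he
  have hj := congrFun he ⟨0, hd⟩
  unfold xpt at hj
  by_cases h1 : ι ⟨0, hd⟩ = i <;> by_cases h2 : ι ⟨0, hd⟩ = i'
  · exact h (h1 ▸ h2)
  · rw [if_pos h1, if_neg h2] at hj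
    have : (0:ℝ) < ((i' : ℕ) : ℝ) + 1 := by positivity
    linarith
  · rw [if_neg h1, if_pos h2] at hj
    have : (0:ℝ) < ((i : ℕ) : ℝ) + 1 := by positivity
    linarith
  · rw [if_neg h1, if_neg h2] at hj
    have : ((i : ℕ) : ℝ) = ((i' : ℕ) : ℝ) := by linarith
    exact h (Fin.ext (by exact_mod_cast this))

lemma aset_unique_j {d r : ℕ} {j j' : Fin d} {v : Fin d → ℝ}
    (hv : v ∈ Aset d r j) (hv' : v ∈ Aset d r j') : j = j' := by
  by_contra hne
  have h1 : 1 ≤ v j := aset_self hv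
  have h2 : v j = 0 := aset_ne hv' hne
  linarith

/-- Any choice of bijections `σ_j : A_j ≃ {1,...,r} \ {i(j)}` yields a Tverberg
partition of the constructed set `X`, with parts
`X_i = {x^i} ∪ {σ_j⁻¹(i) : i ≠ i(j)}`, each containing `0` in its convex hull. -/
theorem bijections_give_tverberg_partition (d r : ℕ) (hd : 1 ≤ d) (hr : 1 ≤ r)
    (a : Fin r → ℕ) (hpos : ∀ i, 1 ≤ a i) (hle : ∀ i, a i ≤ d + 1)
    (hsum : ∑ i, a i = (d + 1) * (r - 1) + 1)
    (ι : Fin d → Fin r)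
    (hι : ∀ i, (Finset.univ.filter fun j => ι j = i).card = d + 1 - a i)
    (σ : ∀ j : Fin d, (Aset d r j) ≃ {i : Fin r // i ≠ ι j}) :
    let P : Fin r → Set (Fin d → ℝ) := fun i =>
      {xpt d r ι i} ∪
        {v | ∃ (j : Fin d) (hv : v ∈ Aset d r j), ((σ j ⟨v, hv⟩ : {i // i ≠ ι j}) : Fin r) = i}
    (∀ i, (0 : Fin d → ℝ) ∈ convexHull ℝ (P i)) ∧
      IsTverbergPartition d r (Xset d r ι) P := by
  classical
  intro P
  -- `0` lies in the convex hull of each part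
  have hP0 : ∀ i, (0 : Fin d → ℝ) ∈ convexHull ℝ (P i) := by
    intro i
    set t₀ : Finset (Fin d) := Finset.univ.filter (fun j => i ≠ ι j) with ht₀
    set z : Option (Fin d) → (Fin d → ℝ) := fun o =>
      Option.rec (xpt d r ι i)
        (fun j => if h : i ≠ ι j then ((σ j).symm ⟨i, h⟩ : Fin d → ℝ) else 0) o with hz
    set w : Option (Fin d) → ℝ := fun o =>
      Option.rec 1 (fun j => ((i : ℕ) + 1 : ℝ) / z (some j) j) o with hw
    set t : Finset (Option (Fin d)) := insert none (t₀.image some) with ht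
    have hnone : (none : Option (Fin d)) ∉ t₀.image some := by simp
    have hmemz : ∀ j ∈ t₀, z (some j) ∈ Aset d r j := by
      intro j hj
      have h : i ≠ ι j := (Finset.mem_filter.mp hj).2
      simp only [hz, dif_pos h]
      exact ((σ j).symm ⟨i, h⟩).2
    have hzj : ∀ j ∈ t₀, 1 ≤ z (some j) j := fun j hj => aset_self (hmemz j hj)
    have hwnn : ∀ o ∈ t, 0 ≤ w o := by
      intro o ho
      match o with
      | none => exact zero_le_one
      | some j =>
        have hj : j ∈ t₀ := by
          rcases Finset.mem_insert.mp ho with h | h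
          · exact absurd h (by simp)
          · rcases Finset.mem_image.mp h with ⟨j', hj', hjj⟩
            rwa [(Option.some_injective _ hjj : j' = j)] at hj'
        have h1 : (1:ℝ) ≤ z (some j) j := hzj j hj
        have h2 : (0:ℝ) ≤ (i : ℕ) + 1 := by positivity
        exact div_nonneg h2 (by linarith)
    have hwsum : 0 < ∑ o ∈ t, w o := by
      have h1 : w none ≤ ∑ o ∈ t, w o :=
        Finset.single_le_sum hwnn (Finset.mem_insert_self _ _)
      have : w none = 1 := rfl
      linarith
    have hzmem : ∀ o ∈ t, z o ∈ P i := by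
      intro o ho
      match o with
      | none => exact Or.inl rfl
      | some j =>
        have hj : j ∈ t₀ := by
          rcases Finset.mem_insert.mp ho with h | h
          · exact absurd h (by simp)
          · rcases Finset.mem_image.mp h with ⟨j', hj', hjj⟩
            rwa [(Option.some_injective _ hjj : j' = j)] at hj'
        have h : i ≠ ι j := (Finset.mem_filter.mp hj).2
        refine Or.inr ⟨j, ?_, ?_⟩
        · show z (some j) ∈ Aset d r j
          exact hmemz j hj
        · show ((σ j ⟨z (some j), hmemz j hj⟩ : {i // i ≠ ι j}) : Fin r) = i
          have hzeq : z (some j) = ((σ j).symm ⟨i, h⟩ : Fin d → ℝ) := by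
            simp only [hz, dif_pos h]
          have : (⟨z (some j), hmemz j hj⟩ : Aset d r j) = (σ j).symm ⟨i, h⟩ :=
            Subtype.ext hzeq
          rw [this, Equiv.apply_symm_apply]
    have hzero : ∑ o ∈ t, w o • z o = 0 := by
      funext j'
      have hsum2 : (∑ o ∈ t, w o • z o) j' =
          w none • z none j' + ∑ j ∈ t₀, w (some j) • z (some j) j' := by
        rw [ht, Finset.sum_insert hnone]
        rw [Finset.sum_image (fun a _ b _ h => Option.some_injective _ h)]
        simp [Finset.sum_apply]
      rw [hsum2]
      by_cases hj' : j' ∈ t₀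
      · have h' : i ≠ ι j' := (Finset.mem_filter.mp hj').2
        have hsum3 : ∑ j ∈ t₀, w (some j) • z (some j) j' =
            w (some j') • z (some j') j' := by
          refine Finset.sum_eq_single_of_mem j' hj' ?_
          intro j hj hne
          have : z (some j) j' = 0 := aset_ne (hmemz j hj) (Ne.symm hne)
          simp [this]
        rw [hsum3]
        have hc : (1:ℝ) ≤ z (some j') j' := hzj j' hj'
        have hcne : z (some j') j' ≠ 0 := by linarith
        have : w (some j') • z (some j') j' = ((i : ℕ) + 1 : ℝ) := by
          show ((i : ℕ) + 1 : ℝ) / z (some j') j' * z (some j') j' = _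
          field_simp
        rw [this]
        have : z none j' = -((i : ℕ) + 1 : ℝ) := by
          show xpt d r ι i j' = _
          unfold xpt
          rw [if_neg (Ne.symm h')]
        rw [this]
        show (1:ℝ) * _ + _ = (0 : Fin d → ℝ) j'
        simp
      · have h' : ι j' = i := by
          by_contra hcon
          exact hj' (Finset.mem_filter.mpr ⟨Finset.mem_univ _, fun h => hcon h.symm⟩)
        have hsum3 : ∑ j ∈ t₀, w (some j) • z (some j) j' = 0 := by
          refine Finset.sum_eq_zero ?_
          intro j hj
          have hne : j ≠ j' := fun h => hj' (h ▸ hj)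
          have : z (some j) j' = 0 := aset_ne (hmemz j hj) (Ne.symm hne)
          simp [this]
        rw [hsum3]
        have : z none j' = 0 := by
          show xpt d r ι i j' = 0
          unfold xpt
          rw [if_pos h']
        rw [this]
        show (1:ℝ) * (0:ℝ) + (0:ℝ) = (0 : Fin d → ℝ) j'
        simp
    have hcm := Finset.centerMass_mem_convexHull t hwnn hwsum hzmem
    rwa [Finset.centerMass, hzero, smul_zero] at hcm
  refine ⟨hP0, ?_, ?_, 0, hP0⟩
  · -- union is X
    ext v
    constructor
    · rintro hv
      rcases Set.mem_iUnion.mp hv with ⟨i, hvi⟩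
      rcases hvi with h | ⟨j, hvj, _⟩
      · exact Or.inl ⟨i, h.symm⟩
      · exact Or.inr (Set.mem_iUnion.mpr ⟨j, hvj⟩)
    · rintro (⟨i, rfl⟩ | hv)
      · exact Set.mem_iUnion.mpr ⟨i, Or.inl rfl⟩
      · rcases Set.mem_iUnion.mp hv with ⟨j, hvj⟩
        exact Set.mem_iUnion.mpr ⟨(σ j ⟨v, hvj⟩ : {i // i ≠ ι j}), Or.inr ⟨j, hvj, rfl⟩⟩
  · -- pairwise disjoint
    intro i i' hne
    rw [Set.disjoint_left]
    intro v hv hv'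
    rcases hv with h1 | ⟨j, hvj, hσ⟩
    · rcases hv' with h2 | ⟨j', hvj', hσ'⟩
      · rw [Set.mem_singleton_iff] at h1 h2
        exact xpt_ne hd ι hne (h1 ▸ h2 ▸ rfl)
      · rw [Set.mem_singleton_iff] at h1
        have ha : 1 ≤ v j' := aset_self hvj'
        have hb : v j' ≤ 0 := h1 ▸ xpt_nonpos ι i j'
        linarith
    · rcases hv' with h2 | ⟨j', hvj', hσ'⟩
      · rw [Set.mem_singleton_iff] at h2
        have ha : 1 ≤ v j := aset_self hvj
        have hb : v j ≤ 0 := h2 ▸ xpt_nonpos ι i' j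
        linarith
      · have hjj : j = j' := aset_unique_j hvj hvj'
        subst hjj
        have : (⟨v, hvj⟩ : Aset d r j) = ⟨v, hvj'⟩ := rfl
        rw [this] at hσ
        exact hne (hσ ▸ hσ' ▸ rfl)
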